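/- arXiv:1812.03445 — 4 statements merged into one kernel-verified Lean document; each statement's English description precedes it below -/
import Mathlib

section
/- Let X₀, X₁, …, X_ℓ be elements of a module over a polynomial ring in q satisfying X_z + q·X_{z+2} = (1+q)·X_{z+1} for all 0 ≤ z ≤ ℓ−2. Then for every 1 ≤ k ≤ ℓ−1, [ℓ−k]_q·X_0 + q^{ℓ−k}·[k]_q·X_ℓ = [ℓ]_q·X_k. -/
/-- The q-integer `[n]_q = 1 + q + ⋯ + q^{n-1}` in a polynomial ring. -/
noncomputable def qint (R : Type*) [CommRing R] (n : ℕ) : Polynomial R :=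
  ∑ i ∈ Finset.range n, Polynomial.X ^ i

lemma qint_add (R : Type*) [CommRing R] (a b : ℕ) :
    qint R (a + b) = qint R a + Polynomial.X ^ a * qint R b := by
  induction b with
  | zero => simp [qint]
  | succ n ih =>
    have : a + (n + 1) = (a + n) + 1 := by ring
    rw [this]
    unfold qint at *
    rw [Finset.sum_range_succ, ih, Finset.sum_range_succ]
    ring

lemma qint_succ (R : Type*) [CommRing R] (n : ℕ) :
    qint R (n + 1) = 1 + Polynomial.X * qint R n := by
  have h := qint_add R 1 n
  rw [Nat.add_comm 1 n] at h
  simpa [qint] using h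

/-- If elements `X 0, …, X ℓ` of a module over the polynomial ring `R[q]` satisfy
`X z + q • X (z+2) = (1+q) • X (z+1)` for all `0 ≤ z ≤ ℓ−2`, then for every
`1 ≤ k ≤ ℓ−1`, `[ℓ−k]_q • X 0 + (q^{ℓ−k}·[k]_q) • X ℓ = [ℓ]_q • X k`. -/
theorem chain_linear_relation_endpoints {R M : Type*} [CommRing R] [AddCommGroup M]
    [Module (Polynomial R) M] (ℓ : ℕ) (X : ℕ → M)
    (hrec : ∀ z, z + 2 ≤ ℓ →
      X z + (Polynomial.X : Polynomial R) • X (z + 2) = ((1 + Polynomial.X : Polynomial R)) • X (z + 1)) :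
    ∀ k, 1 ≤ k → k ≤ ℓ - 1 →
      (qint R (ℓ - k)) • X 0 + ((Polynomial.X : Polynomial R) ^ (ℓ - k) * qint R k) • X ℓ
        = (qint R ℓ) • X k := by
  intro k hk1 hk2
  have hℓ : 2 ≤ ℓ := by omega
  set q : Polynomial R := Polynomial.X with hq
  set D : M := X ℓ - X (ℓ - 1) with hD
  -- differences
  have hdiff : ∀ m z, z + 1 + m = ℓ → X (z + 1) - X z = (q ^ m) • D := by
    intro m
    induction m with
    | zero =>
      intro z hz
      have hz' : z = ℓ - 1 := by omega
      subst hz'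
      have : ℓ - 1 + 1 = ℓ := by omega
      rw [this]
      simp [hD]
    | succ n ih =>
      intro z hz
      have h2 : z + 2 ≤ ℓ := by omega
      have hr := hrec z h2
      have hstep : X (z + 1) - X z = q • (X (z + 2) - X (z + 1)) := by
        linear_combination (norm := module) (-1 : Polynomial R) • hr
      have ih' : X (z + 1 + 1) - X (z + 1) = (q ^ n) • D := ih (z + 1) (by omega)
      have : z + 1 + 1 = z + 2 := by omega
      rw [this] at ih'
      rw [hstep, ih', smul_smul, ← pow_succ']
  -- telescoping sum
  have hsum : ∀ n, n ≤ ℓ → X n - X 0 = (q ^ (ℓ - n) * qint R n) • D := by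
    intro n
    induction n with
    | zero => simp [qint]
    | succ n ih =>
      intro hn
      have ih' := ih (by omega)
      have hd := hdiff (ℓ - 1 - n) n (by omega)
      have e1 : X (n + 1) - X 0 = (X (n + 1) - X n) + (X n - X 0) := by abel
      rw [e1, hd, ih', ← add_smul]
      congr 1
      have h1 : ℓ - 1 - n = ℓ - (n + 1) := by omega
      have h2 : ℓ - n = (ℓ - (n + 1)) + 1 := by omega
      rw [h1, h2, qint_succ]
      ring
  have hXk : X k = X 0 + (q ^ (ℓ - k) * qint R k) • D := by
    have := hsum k (by omega); linear_combination (norm := abel) this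
  have hXl : X ℓ = X 0 + (qint R ℓ) • D := by
    have := hsum ℓ le_rfl
    simp at this
    linear_combination (norm := abel) this
  have hq3 : qint R ℓ = qint R (ℓ - k) + q ^ (ℓ - k) * qint R k := by
    have h := qint_add R (ℓ - k) k
    rw [show ℓ - k + k = ℓ by omega] at h
    exact h
  rw [hXk, hXl, hq3]
  module
end

section
/- Let G be a graph on vertex set {1,…,n} whose edges include three edges e₁, e₂, e₃ forming a triangle. Then the chromatic symmetric functions satisfy X_G = X_{G−e₁} + X_{G−e₂} − X_{G−{e₁,e₂}} (the triple-deletion property). -/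
open scoped Classical

/-- The chromatic symmetric function of a graph `G` on vertices `{1,…,n}`, in the
variables `x_1,…,x_N`: the sum of `∏_v x_{κ(v)}` over proper colorings `κ`. -/
noncomputable def chromSym (n N : ℕ) (G : SimpleGraph (Fin n)) :
    MvPolynomial (Fin N) ℤ :=
  ∑ κ ∈ Finset.univ.filter (fun κ : Fin n → Fin N =>
      ∀ u v, G.Adj u v → κ u ≠ κ v),
    ∏ v, MvPolynomial.X (κ v)

/-- Triple-deletion property: if `e₁ = {a,b}`, `e₂ = {a,c}`, `e₃ = {b,c}` are edges of
`G` forming a triangle, then `X_G = X_{G−e₁} + X_{G−e₂} − X_{G−{e₁,e₂}}`. -/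
theorem triple_deletion (n N : ℕ) (G : SimpleGraph (Fin n)) (a b c : Fin n)
    (hab : G.Adj a b) (hac : G.Adj a c) (hbc : G.Adj b c) :
    chromSym n N G =
      chromSym n N (G.deleteEdges {s(a, b)}) + chromSym n N (G.deleteEdges {s(a, c)})
        - chromSym n N (G.deleteEdges {s(a, b), s(a, c)}) := by
  classical
  have hab' : a ≠ b := hab.ne
  have hac' : a ≠ c := hac.ne
  have hbc' : b ≠ c := hbc.ne
  set f : (Fin n → Fin N) → MvPolynomial (Fin N) ℤ := fun κ => ∏ v, MvPolynomial.X (κ v)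
    with hf
  set A := Finset.univ.filter (fun κ : Fin n → Fin N =>
      ∀ u v, G.Adj u v → κ u ≠ κ v) with hA
  set A1 := Finset.univ.filter (fun κ : Fin n → Fin N =>
      ∀ u v, (G.deleteEdges {s(a,b)}).Adj u v → κ u ≠ κ v) with hA1
  set A2 := Finset.univ.filter (fun κ : Fin n → Fin N =>
      ∀ u v, (G.deleteEdges {s(a,c)}).Adj u v → κ u ≠ κ v) with hA2
  set A12 := Finset.univ.filter (fun κ : Fin n → Fin N =>
      ∀ u v, (G.deleteEdges {s(a,b), s(a,c)}).Adj u v → κ u ≠ κ v) with hA12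
  have hinter : A1 ∩ A2 = A := by
    ext κ
    simp only [hA, hA1, hA2, Finset.mem_inter, Finset.mem_filter, Finset.mem_univ, true_and,
      SimpleGraph.deleteEdges_adj, Set.mem_singleton_iff]
    constructor
    · rintro ⟨h1, h2⟩ u v huv
      by_cases h : s(u,v) = s(a,b)
      · refine h2 u v ⟨huv, ?_⟩
        rw [h, Sym2.eq_iff]
        rintro (⟨-, h'⟩ | ⟨h', -⟩)
        · exact hbc' h'
        · exact hac' h'
      · exact h1 u v ⟨huv, h⟩
    · intro h
      exact ⟨fun u v hu => h u v hu.1, fun u v hu => h u v hu.1⟩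
  have hunion : A1 ∪ A2 = A12 := by
    ext κ
    simp only [hA12, hA1, hA2, Finset.mem_union, Finset.mem_filter, Finset.mem_univ, true_and,
      SimpleGraph.deleteEdges_adj, Set.mem_singleton_iff, Set.mem_insert_iff]
    constructor
    · rintro (h | h) u v ⟨huv, hs⟩
      · exact h u v ⟨huv, fun he => hs (Or.inl he)⟩
      · exact h u v ⟨huv, fun he => hs (Or.inr he)⟩
    · intro h
      have hbcne : κ b ≠ κ c := by
        refine h b c ⟨hbc, ?_⟩
        rw [Sym2.eq_iff, Sym2.eq_iff]
        rintro ((⟨h', -⟩ | ⟨-, h'⟩) | (⟨h', -⟩ | ⟨h', -⟩))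
        · exact hab' h'.symm
        · exact hac' h'.symm
        · exact hab' h'.symm
        · exact hbc' h'
      by_cases hk : κ a = κ c
      · right
        rintro u v ⟨huv, hs⟩
        by_cases he : s(u,v) = s(a,b)
        · rw [Sym2.eq_iff] at he
          rcases he with ⟨rfl, rfl⟩ | ⟨rfl, rfl⟩
          · rw [hk]; exact fun e => hbcne e.symm
          · rw [hk]; exact hbcne
        · exact h u v ⟨huv, by tauto⟩
      · left
        rintro u v ⟨huv, hs⟩
        by_cases he : s(u,v) = s(a,c)
        · rw [Sym2.eq_iff] at he
          rcases he with ⟨rfl, rfl⟩ | ⟨rfl, rfl⟩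
          · exact hk
          · exact fun e => hk e.symm
        · exact h u v ⟨huv, by tauto⟩
  have key := Finset.sum_union_inter (s₁ := A1) (s₂ := A2) (f := f)
  rw [hinter, hunion] at key
  unfold chromSym
  convert (show (∑ κ ∈ A, f κ) = (∑ κ ∈ A1, f κ) + (∑ κ ∈ A2, f κ) - (∑ κ ∈ A12, f κ) from by
    linear_combination key) using 3
  all_goals (simp only [hf, hA1, hA2, hA12] <;> congr!)
end

section
/- Any two words in D_k are Knuth equivalent; more precisely, every word in D_k can be obtained from the word 1 2 ⋯ (k−1) n (n−1) ⋯ (k+1) k by repeatedly applying the elementary Knuth relation replacing a factor xzy by zxy (or vice versa) whenever x < y < z. -/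
/-- The elementary Knuth relation replacing a factor `x z y` by `z x y` (or vice versa)
whenever `x < y < z`. -/
def KnuthStep (l₁ l₂ : List ℕ) : Prop :=
  ∃ (a b : List ℕ) (x y z : ℕ), x < y ∧ y < z ∧
    ((l₁ = a ++ [x, z, y] ++ b ∧ l₂ = a ++ [z, x, y] ++ b) ∨
     (l₁ = a ++ [z, x, y] ++ b ∧ l₂ = a ++ [x, z, y] ++ b))

lemma KnuthStep.symm {l₁ l₂ : List ℕ} (h : KnuthStep l₁ l₂) : KnuthStep l₂ l₁ := by
  obtain ⟨a, b, x, y, z, hxy, hyz, h | h⟩ := h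
  · exact ⟨a, b, x, y, z, hxy, hyz, Or.inr ⟨h.2, h.1⟩⟩
  · exact ⟨a, b, x, y, z, hxy, hyz, Or.inl ⟨h.2, h.1⟩⟩

lemma knuth_rtg_symm {l₁ l₂ : List ℕ} (h : Relation.ReflTransGen KnuthStep l₁ l₂) :
    Relation.ReflTransGen KnuthStep l₂ l₁ := by
  induction h with
  | refl => exact .refl
  | tail _ h ih => exact Relation.ReflTransGen.head h.symm ih

lemma knuth_cons (c : ℕ) {l₁ l₂ : List ℕ} (h : Relation.ReflTransGen KnuthStep l₁ l₂) :
    Relation.ReflTransGen KnuthStep (c :: l₁) (c :: l₂) := by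
  induction h with
  | refl => exact .refl
  | tail _ h ih =>
    refine ih.tail ?_
    obtain ⟨a, b, x, y, z, hxy, hyz, h | h⟩ := h
    · exact ⟨c :: a, b, x, y, z, hxy, hyz, Or.inl ⟨by simp [h.1], by simp [h.2]⟩⟩
    · exact ⟨c :: a, b, x, y, z, hxy, hyz, Or.inr ⟨by simp [h.1], by simp [h.2]⟩⟩

/-- Move a big letter `z` rightwards past a sorted block `A` of small letters. -/
lemma knuth_move (z : ℕ) : ∀ (A : List ℕ) (y : ℕ) (t : List ℕ), A.Pairwise (· < ·) →
    (∀ a ∈ A, a < y) → y < z →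
    Relation.ReflTransGen KnuthStep (z :: (A ++ y :: t)) (A ++ z :: y :: t)
  | [], y, t, _, _, _ => .refl
  | x :: A', y, t, hs, hlt, hyz => by
    have hs' := List.pairwise_cons.mp hs
    have step : KnuthStep (z :: (x :: A' ++ y :: t)) (x :: (z :: (A' ++ y :: t))) := by
      match A' with
      | [] => exact ⟨[], t, x, y, z, hlt x (by simp), hyz, Or.inr ⟨by simp, by simp⟩⟩
      | x' :: A'' =>
        exact ⟨[], A'' ++ y :: t, x, x', z, hs'.1 x' (by simp),
          lt_trans (hlt x' (by simp)) hyz, Or.inr ⟨by simp, by simp⟩⟩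
    exact Relation.ReflTransGen.head step
      (knuth_cons x (knuth_move z A' y t hs'.2 (fun a ha => hlt a (by simp [ha])) hyz))

lemma knuth_main (k : ℕ) : ∀ (w : List ℕ), (∀ x ∈ w, x ≠ k) →
    (w.filter (fun x => x < k)).Pairwise (· < ·) →
    (w.filter (fun x => k < x)).Pairwise (· > ·) →
    Relation.ReflTransGen KnuthStep
      (w.filter (fun x => x < k) ++ w.filter (fun x => k < x) ++ [k]) (w ++ [k])
  | [], _, _, _ => .refl
  | c :: w', hne, hs, hd => by
    have hck : c < k ∨ k < c := (hne c (by simp)).lt_or_gt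
    rcases hck with hck | hck
    · -- c is small
      have e1 : (c :: w').filter (fun x => x < k) = c :: w'.filter (fun x => x < k) := by
        simp [List.filter_cons, hck]
      have e2 : (c :: w').filter (fun x => k < x) = w'.filter (fun x => k < x) := by
        simp [List.filter_cons, not_lt_of_gt hck, hck.not_gt]
      rw [e1] at hs; rw [e2] at hd
      have hs' := List.pairwise_cons.mp hs
      have ih := knuth_main k w' (fun x hx => hne x (by simp [hx])) hs'.2 hd
      have := knuth_cons c ih
      simpa [e1, e2] using this
    · -- c is big
      have e1 : (c :: w').filter (fun x => x < k) = w'.filter (fun x => x < k) := by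
        simp [List.filter_cons, hck.not_gt]
      have e2 : (c :: w').filter (fun x => k < x) = c :: w'.filter (fun x => k < x) := by
        simp [List.filter_cons, hck]
      rw [e1] at hs; rw [e2] at hd
      have hd' := List.pairwise_cons.mp hd
      have ih := knuth_main k w' (fun x hx => hne x (by simp [hx])) hs hd'.2
      set S := w'.filter (fun x => x < k) with hS
      set D := w'.filter (fun x => k < x) with hD
      -- D ++ [k] = y :: t
      obtain ⟨y, t, hyt⟩ : ∃ y t, D ++ [k] = y :: t := by
        cases hDc : D with
        | nil => exact ⟨k, [], by simp [hDc]⟩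
        | cons d D'' => exact ⟨d, D'' ++ [k], by simp [hDc]⟩
      have hky : k ≤ y := by
        have : y ∈ D ++ [k] := by rw [hyt]; simp
        rcases List.mem_append.mp this with h | h
        · rw [hD] at h
          have := List.of_mem_filter h
          simp at this; omega
        · simp at h; omega
      have hyc : y < c := by
        have : y ∈ D ++ [k] := by rw [hyt]; simp
        rcases List.mem_append.mp this with h | h
        · exact hd'.1 y (hD ▸ h)
        · simp at h; omega
      have hSsmall : ∀ a ∈ S, a < y := by
        intro a ha
        rw [hS] at ha
        have := List.of_mem_filter ha
        simp at this; omega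
      have mv := knuth_rtg_symm (knuth_move c S y t hs hSsmall hyc)
      -- mv : S ++ c :: y :: t ~> c :: (S ++ y :: t)
      have step2 := knuth_cons c ih
      rw [e1, e2]
      have eq1 : S ++ (c :: D) ++ [k] = S ++ c :: y :: t := by
        rw [List.append_assoc]; simp [hyt]
      rw [eq1]
      refine mv.trans ?_
      have eq2 : c :: (S ++ y :: t) = c :: (S ++ D ++ [k]) := by
        rw [List.append_assoc, hyt]
      rw [eq2]
      simpa using step2

/-- Every word in `D_k` — a word of length `n` on the letters `{1,…,n}` ending in `k`
whose restriction to `{1,…,k−1}` is increasing and restriction to `{k+1,…,n}` is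
decreasing — can be obtained from the word `1 2 ⋯ (k−1) n (n−1) ⋯ (k+1) k` by
repeatedly applying the elementary Knuth relation; in particular any two words in `D_k`
are Knuth equivalent. -/
theorem Dk_knuth_equivalent (n k : ℕ) (hk : 1 ≤ k) (hkn : k ≤ n) (u : List ℕ)
    (hperm : u.Perm ((List.range n).map (· + 1)))
    (hlast : u.getLast? = some k)
    (hinc : (u.filter (fun x => x < k)).Pairwise (· < ·))
    (hdec : (u.filter (fun x => k < x)).Pairwise (· > ·)) :
    Relation.ReflTransGen KnuthStep
      (List.range' 1 (k - 1) ++ (List.range' (k + 1) (n - k)).reverse ++ [k]) u := by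
  have hne : u ≠ [] := by intro h; simp [h] at hlast
  set w := u.dropLast with hw
  have hl : u.getLast hne = k := by
    rw [List.getLast?_eq_getLast hne] at hlast
    exact Option.some_injective _ hlast
  have hu : u = w ++ [k] := by
    conv_lhs => rw [← List.dropLast_append_getLast hne]
    rw [hl]
  have hnodup : u.Nodup := by
    exact hperm.nodup_iff.mpr ((List.nodup_range (n := n)).map (add_left_injective 1))
  have hknw : ∀ x ∈ w, x ≠ k := by
    rw [hu, List.nodup_append] at hnodup
    intro x hx he
    exact hnodup.2.2 x hx k (by simp) he
  have hf1 : u.filter (fun x => x < k) = w.filter (fun x => x < k) := by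
    rw [hu, List.filter_append]; simp
  have hf2 : u.filter (fun x => k < x) = w.filter (fun x => k < x) := by
    rw [hu, List.filter_append]; simp
  have hrange : ((List.range n).map (· + 1)) = List.range' 1 n := by
    rw [List.range'_eq_map_range]
    exact List.map_congr_left fun a _ => by omega
  have hsplit : List.range' 1 n = List.range' 1 (k - 1) ++ List.range' k (n - k + 1) := by
    have h := List.range'_append (s := 1) (m := k - 1) (n := n - k + 1) (step := 1)
    rw [show 1 + 1 * (k - 1) = k from by omega, show k - 1 + (n - k + 1) = n from by omega] at h
    exact h.symm
  have hfr1 : (List.range' 1 n).filter (fun x => x < k) = List.range' 1 (k - 1) := by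
    rw [hsplit, List.filter_append]
    have a1 : (List.range' 1 (k - 1)).filter (fun x => x < k) = List.range' 1 (k - 1) := by
      refine List.filter_eq_self.mpr fun a ha => ?_
      rw [List.mem_range'_1] at ha
      simp; omega
    have a2 : (List.range' k (n - k + 1)).filter (fun x => x < k) = [] := by
      refine List.filter_eq_nil_iff.mpr fun a ha => ?_
      rw [List.mem_range'_1] at ha
      simp; omega
    rw [a1, a2, List.append_nil]
  have hfr2 : (List.range' 1 n).filter (fun x => k < x) = List.range' (k + 1) (n - k) := by
    rw [hsplit, List.filter_append]
    have a1 : (List.range' 1 (k - 1)).filter (fun x => k < x) = [] := by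
      refine List.filter_eq_nil_iff.mpr fun a ha => ?_
      rw [List.mem_range'_1] at ha
      simp; omega
    have a2 : (List.range' k (n - k + 1)).filter (fun x => k < x) = List.range' (k + 1) (n - k) := by
      rw [List.range'_succ, List.filter_cons, if_neg (by simp)]
      refine List.filter_eq_self.mpr fun a ha => ?_
      rw [List.mem_range'_1] at ha
      simp; omega
    rw [a1, a2, List.nil_append]
  haveI ha1 : IsAntisymm ℕ (· < ·) := ⟨fun a b h h' => absurd h' (lt_asymm h)⟩
  haveI ha2 : IsAntisymm ℕ (· > ·) := ⟨fun a b h h' => absurd h' (lt_asymm h)⟩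
  have sorted1 : (List.range' 1 (k - 1)).Pairwise (· < ·) := List.pairwise_lt_range' (s := 1) (n := k - 1)
  have sorted2 : ((List.range' (k + 1) (n - k)).reverse).Pairwise (· > ·) := by
    rw [List.pairwise_reverse]
    exact List.pairwise_lt_range' (s := k + 1) (n := n - k)
  have perm1 : (w.filter (fun x => x < k)).Perm (List.range' 1 (k - 1)) := by
    rw [← hf1, ← hfr1, ← hrange]
    exact hperm.filter _
  have perm2 : (w.filter (fun x => k < x)).Perm ((List.range' (k + 1) (n - k)).reverse) := by
    rw [← hf2, ← hfr2, ← hrange]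
    exact (hperm.filter _).trans (List.reverse_perm _).symm
  have eqs : w.filter (fun x => x < k) = List.range' 1 (k - 1) :=
    perm1.eq_of_pairwise' (hf1 ▸ hinc) sorted1
  have eqd : w.filter (fun x => k < x) = (List.range' (k + 1) (n - k)).reverse :=
    perm2.eq_of_pairwise' (hf2 ▸ hdec) sorted2
  rw [hu, ← eqs, ← eqd]
  exact knuth_main k w hknw (hf1 ▸ hinc) (hf2 ▸ hdec)
end

section
/- For any word w of positive integers, the descent set of w equals the descent set of the recording tableau Q(w) under the RSK insertion algorithm: D(w) = D(Q(w)). -/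
/-- Insert `x` into a row `r` of a semistandard tableau: either append it at the end,
or bump the leftmost entry strictly larger than `x`. Returns the new row and the
bumped entry (if any). -/
def bumpRow (r : List ℕ) (x : ℕ) : List ℕ × Option ℕ :=
  match r.findIdx? (fun y => x < y) with
  | none => (r ++ [x], none)
  | some i => (r.set i x, some (r.getD i 0))

/-- RSK row insertion of a letter `x` into a tableau (a list of rows). -/
def insertT : List (List ℕ) → ℕ → List (List ℕ)
  | [], x => [[x]]
  | r :: rs, x =>
    match bumpRow r x with
    | (r', none) => r' :: rs
    | (r', some y) => r' :: insertT rs y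

/-- The index of the row in which the shape grew when passing from `P` to `P'`. -/
def newRowIdx (P P' : List (List ℕ)) : ℕ :=
  ((List.range P'.length).filter
    (fun i => (P.getD i []).length ≠ (P'.getD i []).length)).headD 0

/-- Add the entry `t` at the end of row `i` of the recording tableau `Q`. -/
def addEntry (Q : List (List ℕ)) (i t : ℕ) : List (List ℕ) :=
  if i < Q.length then Q.set i ((Q.getD i []) ++ [t]) else Q ++ [[t]]

/-- Auxiliary RSK recursion carrying the insertion tableau `P`, the recording tableau
`Q` and the next label `t`. -/
def rskAux : List (List ℕ) → List (List ℕ) → ℕ → List ℕ → List (List ℕ)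
  | _, Q, _, [] => Q
  | P, Q, t, x :: xs =>
    rskAux (insertT P x) (addEntry Q (newRowIdx P (insertT P x)) t) (t + 1) xs

/-- The standard recording tableau `Q(w)` of the word `w` under RSK insertion. -/
def rskQ (w : List ℕ) : List (List ℕ) := rskAux [] [] 1 w

/-- The (0-based) index of the row of the tableau `Q` containing the entry `v`. -/
def rowOf (Q : List (List ℕ)) (v : ℕ) : ℕ := Q.findIdx (fun r => r.contains v)


/-- The depth (0-based row index of the new box) of an RSK insertion. -/
def depth : List (List ℕ) → ℕ → ℕ
  | [], _ => 0
  | r :: rs, x =>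
    match bumpRow r x with
    | (_, none) => 0
    | (_, some y) => depth rs y + 1






section Bump
open List

lemma findIdx?_none_facts {r : List ℕ} {x : ℕ}
    (h : r.findIdx? (fun y => x < y) = none) : ∀ z ∈ r, z ≤ x := by
  intro z hz
  have := List.findIdx?_eq_none_iff.mp h z hz
  simpa using this

lemma findIdx?_some_facts {r : List ℕ} {x i : ℕ}
    (h : r.findIdx? (fun y => x < y) = some i) :
    ∃ hi : i < r.length, x < r[i] ∧ ∀ k (hk : k < i), r[k]'(hk.trans hi) ≤ x := by
  obtain ⟨hi, hfi⟩ := List.findIdx?_eq_some_iff_findIdx_eq.mp h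
  refine ⟨hi, ?_, ?_⟩
  · have := List.findIdx_getElem (p := fun y => decide (x < y)) (xs := r) (w := hfi ▸ hi)
    simp only [hfi] at this; simpa using this
  · intro k hk
    have := List.not_of_lt_findIdx (p := fun y => decide (x < y)) (xs := r) (i := k)
      (by omega : k < r.findIdx _)
    simpa using this

lemma sorted_bumpRow {r : List ℕ} (hr : r.Pairwise (· ≤ ·)) (x : ℕ) :
    (bumpRow r x).1.Pairwise (· ≤ ·) := by
  rcases hfi : r.findIdx? (fun y => x < y) with _ | i
  · have hle := findIdx?_none_facts hfi
    simp only [bumpRow, hfi]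
    rw [List.pairwise_append]
    exact ⟨hr, by simp, by simpa using hle⟩
  · obtain ⟨hi, hxi, hk⟩ := findIdx?_some_facts hfi
    simp only [bumpRow, hfi]
    rw [List.pairwise_iff_getElem]
    intro a b ha hb hab
    rw [List.length_set] at ha hb
    have hsort : ∀ (a b : ℕ) (ha : a < r.length) (hb : b < r.length), a ≤ b → r[a] ≤ r[b] := by
      intro a b ha hb h
      rcases eq_or_lt_of_le h with rfl | h
      · rfl
      · exact (List.pairwise_iff_getElem.mp hr) a b ha hb h
    by_cases hai : a = i
    · subst hai
      rw [List.getElem_set_self, List.getElem_set_ne (by omega)]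
      exact le_trans (le_of_lt hxi) (hsort _ _ hi (by simpa using hb) (by omega))
    · by_cases hbi : b = i
      · subst hbi
        rw [List.getElem_set_self, List.getElem_set_ne (by omega)]
        exact hk a hab
      · rw [List.getElem_set_ne (by omega), List.getElem_set_ne (by omega)]
        exact hsort _ _ ha hb (le_of_lt hab)

end Bump

section Claims
open List

lemma depth_le : ∀ (P : List (List ℕ)) (x y : ℕ), (∀ r ∈ P, r.Pairwise (· ≤ ·)) → x ≤ y →
    depth (insertT P x) y ≤ depth P x := by
  intro P
  induction P with
  | nil =>
    intro x y _ hxy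
    have : ([x].findIdx? (fun z => y < z)) = none := by
      rw [List.findIdx?_eq_none_iff]; intro z hz; simp at hz; subst hz; simpa using hxy
    simp [insertT, depth, bumpRow, this]
  | cons r rs ih =>
    intro x y hsort hxy
    rcases hfi : r.findIdx? (fun z => x < z) with _ | i
    · have hle := findIdx?_none_facts hfi
      have h2 : ((r ++ [x]).findIdx? (fun z => y < z)) = none := by
        rw [List.findIdx?_eq_none_iff]
        intro z hz
        simp only [List.mem_append, List.mem_singleton] at hz
        rcases hz with hz | rfl
        · simpa using not_lt.mpr ((hle z hz).trans hxy)
        · simpa using not_lt.mpr hxy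
      simp [insertT, depth, bumpRow, hfi, h2]
    · obtain ⟨hi, hxi, hk⟩ := findIdx?_some_facts hfi
      have hda : depth (r :: rs) x = depth rs (r.getD i 0) + 1 := by
        simp [depth, bumpRow, hfi]
      have hins : insertT (r :: rs) x = (r.set i x) :: insertT rs (r.getD i 0) := by
        simp [insertT, bumpRow, hfi]
      rw [hda, hins]
      rcases hfj : (r.set i x).findIdx? (fun z => y < z) with _ | j
      · simp [depth, bumpRow, hfj]
      · obtain ⟨hj, hyj, hkj⟩ := findIdx?_some_facts hfj
        rw [List.length_set] at hj
        have hij : i < j := by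
          by_contra hc
          push_neg at hc
          rcases eq_or_lt_of_le hc with rfl | hc
          · rw [List.getElem_set_self] at hyj; omega
          · have h1 : (r.set i x)[j]'(by simpa using hj) = r[j]'(hc.trans hi) :=
              List.getElem_set_ne (by omega) _
            have h2 := hk j hc
            rw [h1] at hyj; omega
        have hb : (r.set i x).getD j 0 = r[j] := by
          rw [List.getD_eq_getElem _ _ (by simpa using hj), List.getElem_set_ne (by omega)]
        have hab : r.getD i 0 ≤ (r.set i x).getD j 0 := by
          rw [hb, List.getD_eq_getElem _ _ hi]
          exact (List.pairwise_iff_getElem.mp (hsort r (by simp))) i j hi hj hij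
        have := ih (r.getD i 0) ((r.set i x).getD j 0)
          (fun s hs => hsort s (by simp [hs])) hab
        simp only [depth, bumpRow, hfj]
        omega

lemma depth_lt : ∀ (P : List (List ℕ)) (x y : ℕ), (∀ r ∈ P, r.Pairwise (· ≤ ·)) → y < x →
    depth P x < depth (insertT P x) y := by
  intro P
  induction P with
  | nil =>
    intro x y _ hyx
    have : ([x].findIdx? (fun z => y < z)) = some 0 := by
      simp [List.findIdx?_cons, hyx]
    simp [insertT, depth, bumpRow, this]
  | cons r rs ih =>
    intro x y hsort hyx
    rcases hfi : r.findIdx? (fun z => x < z) with _ | i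
    · -- x appended at end; y < x bumps something in r ++ [x]
      have hex : ∃ z ∈ (r ++ [x]), (fun z => decide (y < z)) z = true := by
        exact ⟨x, by simp, by simpa using hyx⟩
      have hlt := List.findIdx_lt_length_of_exists hex
      have h2 : ((r ++ [x]).findIdx? (fun z => y < z)) =
          some ((r ++ [x]).findIdx (fun z => y < z)) :=
        List.findIdx?_eq_some_iff_findIdx_eq.mpr ⟨hlt, rfl⟩
      simp [insertT, depth, bumpRow, hfi, h2]
    · obtain ⟨hi, hxi, hk⟩ := findIdx?_some_facts hfi
      have hda : depth (r :: rs) x = depth rs (r.getD i 0) + 1 := by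
        simp [depth, bumpRow, hfi]
      have hins : insertT (r :: rs) x = (r.set i x) :: insertT rs (r.getD i 0) := by
        simp [insertT, bumpRow, hfi]
      rw [hda, hins]
      -- y < x = (r.set i x)[i], so findIdx? (y < ·) is some j with j ≤ i
      have hex : ∃ z ∈ (r.set i x), (fun z => decide (y < z)) z = true := by
        refine ⟨x, ?_, by simpa using hyx⟩
        exact List.mem_iff_getElem.mpr ⟨i, by simpa using hi, List.getElem_set_self _⟩
      have hlt := List.findIdx_lt_length_of_exists hex
      obtain ⟨j, hfj⟩ : ∃ j, (r.set i x).findIdx? (fun z => y < z) = some j :=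
        ⟨_, List.findIdx?_eq_some_iff_findIdx_eq.mpr ⟨hlt, rfl⟩⟩
      obtain ⟨hj, hyj, hkj⟩ := findIdx?_some_facts hfj
      rw [List.length_set] at hj
      have hji : j ≤ i := by
        by_contra hc
        push_neg at hc
        have := hkj i hc
        rw [List.getElem_set_self] at this; omega
      have hba : (r.set i x).getD j 0 < r.getD i 0 := by
        rw [List.getD_eq_getElem _ _ (by simpa using hj), List.getD_eq_getElem _ _ hi]
        rcases eq_or_lt_of_le hji with rfl | hji'
        · rw [List.getElem_set_self]; exact hxi
        · rw [List.getElem_set_ne (by omega)]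
          calc r[j] ≤ x := hk j hji'
          _ < r[i] := hxi
      have := ih (r.getD i 0) ((r.set i x).getD j 0)
        (fun s hs => hsort s (by simp [hs])) hba
      simp only [depth, bumpRow, hfj]
      omega

end Claims



section Shape
open List

lemma depth_le_length : ∀ (P : List (List ℕ)) (x : ℕ), depth P x ≤ P.length := by
  intro P
  induction P with
  | nil => intro x; simp [depth]
  | cons r rs ih =>
    intro x
    rcases hfi : r.findIdx? (fun z => x < z) with _ | i
    · simp [depth, bumpRow, hfi]
    · simp only [depth, bumpRow, hfi, List.length_cons]
      have := ih (r.getD i 0); omega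

lemma length_insertT (P : List (List ℕ)) (x : ℕ) :
    (insertT P x).length = if depth P x = P.length then P.length + 1 else P.length := by
  induction P generalizing x with
  | nil => simp [insertT, depth]
  | cons r rs ih =>
    rcases hfi : r.findIdx? (fun z => x < z) with _ | i
    · simp [insertT, depth, bumpRow, hfi]
    · simp only [insertT, depth, bumpRow, hfi, List.length_cons]
      rw [ih (r.getD i 0)]
      split_ifs with h1 h2 <;> omega

lemma getD_length_insertT (P : List (List ℕ)) (x : ℕ) (i : ℕ) :
    (((insertT P x).getD i []).length) =
      if i = depth P x then (P.getD i []).length + 1 else (P.getD i []).length := by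
  induction P generalizing x i with
  | nil =>
    simp only [insertT, depth]
    match i with
    | 0 => simp
    | (j+1) => simp
  | cons r rs ih =>
    rcases hfi : r.findIdx? (fun z => x < z) with _ | j
    · simp only [insertT, depth, bumpRow, hfi]
      match i with
      | 0 => simp
      | (k+1) => simp
    · simp only [insertT, depth, bumpRow, hfi]
      match i with
      | 0 => simp
      | (k+1) =>
        simp only [List.getD_cons_succ]
        rw [ih (r.getD j 0) k]
        split_ifs with h1 h2 <;> omega

lemma headD_filter_range (n d : ℕ) (p : ℕ → Bool) (hd : d < n) (hpd : p d)
    (hlt : ∀ k < d, ¬ p k) : ((List.range n).filter p).headD 0 = d := by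
  obtain ⟨m, rfl⟩ : ∃ m, n = (d + 1) + m := ⟨n - (d+1), by omega⟩
  rw [List.range_add, List.filter_append, List.range_succ, List.filter_append]
  have h1 : (List.range d).filter p = [] := by
    rw [List.filter_eq_nil_iff]; intro a ha; exact hlt a (List.mem_range.mp ha)
  simp [h1, hpd]

lemma newRowIdx_insertT (P : List (List ℕ)) (x : ℕ) :
    newRowIdx P (insertT P x) = depth P x := by
  unfold newRowIdx
  apply headD_filter_range
  · rw [length_insertT]
    have := depth_le_length P x
    by_cases h : depth P x = P.length <;> simp [h] <;> omega
  · have := getD_length_insertT P x (depth P x)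
    rw [if_pos rfl] at this
    simp only [ne_eq, decide_not, Bool.not_eq_true', decide_eq_false_iff_not, not_not,
      decide_eq_true_eq]
    omega
  · intro k hk
    have := getD_length_insertT P x k
    rw [if_neg (by omega)] at this
    simp only [ne_eq, decide_not, Bool.not_eq_true', decide_eq_false_iff_not, not_not,
      decide_eq_true_eq]
    omega

lemma sorted_insertT (P : List (List ℕ)) (x : ℕ) (h : ∀ r ∈ P, r.Pairwise (· ≤ ·)) :
    ∀ r ∈ insertT P x, r.Pairwise (· ≤ ·) := by
  induction P generalizing x with
  | nil =>
    intro r hr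
    simp [insertT] at hr; subst hr; simp
  | cons r rs ih =>
    intro s hs
    rcases hfi : r.findIdx? (fun z => x < z) with _ | i
    · simp only [insertT, bumpRow, hfi] at hs
      rcases List.mem_cons.mp hs with rfl | hs
      · have := sorted_bumpRow (h r (by simp)) x
        simpa [bumpRow, hfi] using this
      · exact h s (by simp [hs])
    · simp only [insertT, bumpRow, hfi] at hs
      rcases List.mem_cons.mp hs with rfl | hs
      · have := sorted_bumpRow (h r (by simp)) x
        simpa [bumpRow, hfi] using this
      · exact ih (r.getD i 0) (fun t ht => h t (by simp [ht])) s hs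

end Shape









section QSide
open List

lemma findIdx_set_congr {α : Type*} (p : α → Bool) (dflt : α) :
    ∀ (l : List α) (d : ℕ) (r : α), p r = p (l.getD d dflt) →
      (l.set d r).findIdx p = l.findIdx p := by
  intro l
  induction l with
  | nil => intros; simp
  | cons a l' ih =>
    intro d r h
    match d with
    | 0 =>
      simp only [List.getD_cons_zero] at h
      simp [List.findIdx_cons, h]
    | (k+1) =>
      simp only [List.getD_cons_succ] at h
      simp only [List.set_cons_succ, List.findIdx_cons]
      rw [ih k r h]

lemma findIdx_eq_getD {α : Type*} (p : α → Bool) (dflt : α) :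
    ∀ (l : List α) (d : ℕ), d < l.length → p (l.getD d dflt) = true →
      (∀ k < d, p (l.getD k dflt) = false) → l.findIdx p = d := by
  intro l
  induction l with
  | nil => intro d hd; simp at hd
  | cons a l' ih =>
    intro d hd h1 h2
    match d with
    | 0 =>
      simp only [List.getD_cons_zero] at h1
      simp [List.findIdx_cons, h1]
    | (k+1) =>
      have ha : p a = false := by simpa using h2 0 (by omega)
      simp only [List.findIdx_cons, ha, cond_false]
      rw [ih k (by simpa using hd) (by simpa using h1)
        (fun j hj => by simpa using h2 (j+1) (by omega))]

lemma rowOf_addEntry_fresh (Q : List (List ℕ)) (d t : ℕ) (hd : d ≤ Q.length)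
    (hb : ∀ row ∈ Q, ∀ v ∈ row, v < t) : rowOf (addEntry Q d t) t = d := by
  unfold addEntry rowOf
  have hnotmem : ∀ k, k < Q.length → ((Q.getD k []).contains t) = false := by
    intro k hk
    rw [List.getD_eq_getElem _ _ hk]
    by_contra hc
    rw [Bool.not_eq_false] at hc
    have : t ∈ Q[k] := by simpa using hc
    exact absurd (hb _ (List.getElem_mem hk) t this) (lt_irrefl t)
  by_cases h : d < Q.length
  · rw [if_pos h]
    apply findIdx_eq_getD _ ([] : List ℕ)
    · simpa using h
    · rw [List.getD_eq_getElem _ _ (by simpa using h), List.getElem_set_self]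
      simp
    · intro k hk
      rw [List.getD_eq_getElem _ _ (by simp; omega), List.getElem_set_ne (by omega)]
      rw [← List.getD_eq_getElem _ ([] : List ℕ) (by omega)]
      exact hnotmem k (by omega)
  · have hd' : d = Q.length := by omega
    subst hd'
    rw [if_neg h]
    apply findIdx_eq_getD _ ([] : List ℕ)
    · simp
    · rw [List.getD_eq_getElem _ _ (by simp), List.getElem_append_right (le_refl _)]
      simp
    · intro k hk
      rw [List.getD_append _ _ _ _ hk]
      exact hnotmem k hk

lemma rowOf_addEntry_old (Q : List (List ℕ)) (d t v : ℕ) (hv : v ≠ t)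
    (hmem : ∃ row ∈ Q, row.contains v) : rowOf (addEntry Q d t) v = rowOf Q v := by
  unfold addEntry rowOf
  by_cases h : d < Q.length
  · rw [if_pos h]
    apply findIdx_set_congr _ ([] : List ℕ)
    simp [hv]
  · rw [if_neg h, List.findIdx_append]
    rw [if_pos (List.findIdx_lt_length_of_exists (by simpa using hmem))]

lemma mem_addEntry_old (Q : List (List ℕ)) (d t v : ℕ)
    (hmem : ∃ row ∈ Q, row.contains v) : ∃ row ∈ addEntry Q d t, row.contains v := by
  unfold addEntry
  obtain ⟨row, hrow, hc⟩ := hmem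
  obtain ⟨j, hj, rfl⟩ := List.mem_iff_getElem.mp hrow
  by_cases h : d < Q.length
  · rw [if_pos h]
    by_cases hjd : j = d
    · subst hjd
      refine ⟨Q.getD j [] ++ [t], ?_, ?_⟩
      · exact List.mem_iff_getElem.mpr ⟨j, by simpa using h, by rw [List.getElem_set_self]⟩
      · rw [List.getD_eq_getElem _ _ hj]
        have : v ∈ Q[j] := by simpa using hc
        simp [this]
    · refine ⟨Q[j], ?_, hc⟩
      exact List.mem_iff_getElem.mpr ⟨j, by simpa using hj, List.getElem_set_ne (fun hh => hjd hh.symm) _⟩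
  · rw [if_neg h]
    exact ⟨Q[j], List.mem_append_left _ hrow, hc⟩

lemma mem_addEntry_self (Q : List (List ℕ)) (d t : ℕ) (hd : d ≤ Q.length) :
    ∃ row ∈ addEntry Q d t, row.contains t := by
  unfold addEntry
  by_cases h : d < Q.length
  · rw [if_pos h]
    refine ⟨Q.getD d [] ++ [t], ?_, by simp⟩
    exact List.mem_iff_getElem.mpr ⟨d, by simpa using h, List.getElem_set_self _⟩
  · rw [if_neg h]
    exact ⟨[t], by simp, by simp⟩

lemma bound_addEntry (Q : List (List ℕ)) (d t : ℕ)
    (hb : ∀ row ∈ Q, ∀ v ∈ row, v < t) :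
    ∀ row ∈ addEntry Q d t, ∀ v ∈ row, v < t + 1 := by
  unfold addEntry
  intro row hrow v hv
  by_cases h : d < Q.length
  · rw [if_pos h] at hrow
    rcases List.mem_or_eq_of_mem_set hrow with hrow | rfl
    · exact (hb row hrow v hv).trans (by omega)
    · rcases List.mem_append.mp hv with hv | hv
      · exact (hb _ (by rw [List.getD_eq_getElem _ _ (by omega : d < Q.length)]; exact List.getElem_mem _) v hv).trans (by omega)
      · simp at hv; omega
  · rw [if_neg h] at hrow
    rcases List.mem_append.mp hrow with hrow | hrow
    · exact (hb row hrow v hv).trans (by omega)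
    · simp at hrow; subst hrow; simp at hv; omega

lemma length_addEntry (Q : List (List ℕ)) (d t : ℕ) :
    (addEntry Q d t).length = if d < Q.length then Q.length else Q.length + 1 := by
  unfold addEntry
  by_cases h : d < Q.length <;> simp [h]

end QSide

section Main
open List

lemma rowOf_rskAux_old : ∀ (xs : List ℕ) (P Q : List (List ℕ)) (t v : ℕ), v < t →
    (∀ row ∈ Q, ∀ u ∈ row, u < t) → (∃ row ∈ Q, row.contains v) →
    rowOf (rskAux P Q t xs) v = rowOf Q v := by
  intro xs
  induction xs with
  | nil => intros; rfl
  | cons x xs ih =>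
    intro P Q t v hv hb hmem
    show rowOf (rskAux (insertT P x) (addEntry Q (newRowIdx P (insertT P x)) t) (t+1) xs) v = _
    rw [ih _ _ _ _ (by omega) (bound_addEntry _ _ _ hb) (mem_addEntry_old _ _ _ _ hmem)]
    exact rowOf_addEntry_old _ _ _ _ (by omega) hmem

lemma rowOf_rskAux : ∀ (xs : List ℕ) (P Q : List (List ℕ)) (t k : ℕ),
    (∀ r ∈ P, r.Pairwise (· ≤ ·)) → Q.length = P.length →
    (∀ row ∈ Q, ∀ u ∈ row, u < t) → k < xs.length →
    rowOf (rskAux P Q t xs) (t + k) =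
      depth (List.foldl insertT P (xs.take k)) (xs.getD k 0) := by
  intro xs
  induction xs with
  | nil => intro P Q t k _ _ _ h; simp at h
  | cons x xs ih =>
    intro P Q t k hsort hlen hb hk
    have hd : newRowIdx P (insertT P x) = depth P x := newRowIdx_insertT P x
    have hdep := depth_le_length P x
    have hlen' : (addEntry Q (newRowIdx P (insertT P x)) t).length = (insertT P x).length := by
      rw [hd, length_addEntry, length_insertT, hlen]
      by_cases h : depth P x = P.length
      · rw [if_neg (by omega), if_pos h]
      · rw [if_pos (by omega), if_neg h]
    match k with
    | 0 =>
      show rowOf (rskAux (insertT P x) (addEntry Q (newRowIdx P (insertT P x)) t) (t+1) xs)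
        (t+0) = depth (List.foldl insertT P ((x :: xs).take 0)) ((x :: xs).getD 0 0)
      rw [rowOf_rskAux_old xs _ _ _ _ (by omega) (bound_addEntry _ _ _ hb)
        (by rw [hd]; exact mem_addEntry_self _ _ _ (by omega))]
      rw [hd]
      simpa using rowOf_addEntry_fresh Q (depth P x) t (by omega) hb
    | (k'+1) =>
      show rowOf (rskAux (insertT P x) (addEntry Q (newRowIdx P (insertT P x)) t) (t+1) xs)
        (t+(k'+1)) = depth (List.foldl insertT P ((x :: xs).take (k'+1))) ((x :: xs).getD (k'+1) 0)
      have he : t + (k'+1) = (t+1) + k' := by omega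
      rw [he]
      rw [ih (insertT P x) _ (t+1) k' (sorted_insertT _ _ hsort) hlen'
        (bound_addEntry _ _ _ hb) (by simpa using hk)]
      rfl

lemma sorted_foldl_insertT : ∀ (l : List ℕ) (P : List (List ℕ)),
    (∀ r ∈ P, r.Pairwise (· ≤ ·)) → ∀ r ∈ List.foldl insertT P l, r.Pairwise (· ≤ ·) := by
  intro l
  induction l with
  | nil => intro P h; exact h
  | cons x l ih => intro P h; exact ih _ (sorted_insertT _ _ h)

end Main


/-- For any word `w` of positive integers, the descent set of `w` equals the descent set
of the recording tableau `Q(w)` under RSK: position `i` is a descent of `w` iff the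
entry `i+1` lies in a strictly lower row of `Q(w)` than the entry `i`
(entries of `Q(w)` are `1,…,n`; positions here are 0-based). -/
theorem descents_eq_descents_rskQ (w : List ℕ) (hpos : ∀ x ∈ w, 0 < x) :
    ∀ i, i + 1 < w.length →
      (w.getD (i + 1) 0 < w.getD i 0 ↔ rowOf (rskQ w) (i + 1) < rowOf (rskQ w) (i + 2)) := by
  intro i hi
  have h1 : rowOf (rskQ w) (i+1) =
      depth (List.foldl insertT [] (w.take i)) (w.getD i 0) := by
    have := rowOf_rskAux w [] [] 1 i (by simp) (by simp) (by simp) (by omega)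
    have e : i + 1 = 1 + i := by omega
    rw [e]; exact this
  have h2 : rowOf (rskQ w) (i+2) =
      depth (List.foldl insertT [] (w.take (i+1))) (w.getD (i+1) 0) := by
    have := rowOf_rskAux w [] [] 1 (i+1) (by simp) (by simp) (by simp) (by omega)
    have e : i + 2 = 1 + (i + 1) := by omega
    rw [e]; exact this
  have hg : w[i]? = some (w.getD i 0) := by
    rw [List.getD_eq_getElem _ _ (by omega)]
    exact List.getElem?_eq_getElem _
  have hstep : List.foldl insertT [] (w.take (i+1)) =
      insertT (List.foldl insertT [] (w.take i)) (w.getD i 0) := by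
    rw [List.take_succ, hg]
    simp [List.foldl_concat]
  have hsorted := sorted_foldl_insertT (w.take i) [] (by simp)
  constructor
  · intro h
    rw [h1, h2, hstep]
    exact depth_lt _ _ _ hsorted h
  · intro h
    by_contra hc
    push_neg at hc
    rw [h1, h2, hstep] at h
    exact absurd h (not_lt.mpr (depth_le _ _ _ hsorted hc))
end
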